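/- Let s_λ be the minimal integer s such that the lowest weight vector v_{w₀(λ)} of V(λ) lies in V(λ)_s. Then s_λ = deg p_λ(q) and V(λ) = V(λ)_{s_λ}, i.e. the filtration stabilizes exactly at the step in which the lowest weight vector first appears. -/

import Mathlib

open Module Polynomial

namespace PBW

variable {L : Type*} [LieRing L] [LieAlgebra ℂ L]
variable {V : Type*} [AddCommGroup V] [Module ℂ V] [LieRingModule L V] [LieModule ℂ L V]

/-- One step of the PBW filtration: `W ↦ W + n⁻ · W`. -/
def step (N : LieSubalgebra ℂ L) (W : Submodule ℂ V) : Submodule ℂ V :=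
  W ⊔ Submodule.span ℂ { z : V | ∃ x ∈ N, ∃ w ∈ W, z = ⁅x, w⁆ }

/-- The PBW filtration `V(λ)_s = U(n⁻)_s · v` of the cyclic module generated by `v`,
obtained by iterating `step`. -/
def filt (N : LieSubalgebra ℂ L) (v : V) (s : ℕ) : Submodule ℂ V :=
  (step N)^[s] (Submodule.span ℂ {v})

/-- The coefficients of the Hilbert–Poincaré polynomial:
`dim (V(λ)_s / V(λ)_{s-1})` with the convention `V(λ)_{-1} = 0`. -/
noncomputable def hpCoeff (N : LieSubalgebra ℂ L) (v : V) : ℕ → ℕ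
  | 0 => finrank ℂ (filt N v 0)
  | s + 1 => finrank ℂ (filt N v (s + 1)) - finrank ℂ (filt N v s)

/-- The Hilbert–Poincaré polynomial `p_λ(q) = ∑_{s ≥ 0} dim (V(λ)_s / V(λ)_{s-1}) qˢ`
of the PBW-graded module.  (The filtration of the finite-dimensional module `V` is
increasing, hence stabilizes after at most `dim V` steps, so all higher coefficients
vanish and the sum may be truncated at `s = dim V`.) -/
noncomputable def hp (N : LieSubalgebra ℂ L) (v : V) : Polynomial ℕ :=
  ∑ s ∈ Finset.range (finrank ℂ V + 1), C (hpCoeff N v s) * X ^ s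

/-- The `χ`-weight space of the module `V` for the action of the Cartan subalgebra `H`. -/
def wtSpace (H : LieSubalgebra ℂ L) (χ : Module.Dual ℂ H) : Submodule ℂ V where
  carrier := { w : V | ∀ x : H, ⁅(x : L), w⁆ = χ x • w }
  add_mem' := by
    intro a b ha hb x
    simp [lie_add, ha x, hb x, smul_add]
  zero_mem' := by intro x; simp
  smul_mem' := by
    intro c a ha x
    rw [lie_smul, ha x, smul_comm]

/-- A triangular decomposition `g = n⁺ ⊕ h ⊕ n⁻`: `h` is a Cartan subalgebra,
`g` is the internal direct sum of the three subalgebras, and `n⁺`, `n⁻` are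
stable under the adjoint action of `h`. -/
structure IsTriangularDecomp (H npos nneg : LieSubalgebra ℂ L) : Prop where
  cartan : H.IsCartanSubalgebra
  directSum : DirectSum.IsInternal
    (fun i : Fin 3 => ![npos.toSubmodule, H.toSubmodule, nneg.toSubmodule] i)
  pos_stable : ∀ x ∈ H, ∀ y ∈ npos, ⁅x, y⁆ ∈ npos
  neg_stable : ∀ x ∈ H, ∀ y ∈ nneg, ⁅x, y⁆ ∈ nneg

set_option linter.unusedSectionVars false

/-! ### Auxiliary machinery -/

/-- Generalized `step`, for an arbitrary submodule of `L`. -/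
def step2 (A : Submodule ℂ L) (W : Submodule ℂ V) : Submodule ℂ V :=
  W ⊔ Submodule.span ℂ { z : V | ∃ x ∈ A, ∃ w ∈ W, z = ⁅x, w⁆ }

/-- Generalized filtration. -/
def filt2 (A : Submodule ℂ L) (u : V) (s : ℕ) : Submodule ℂ V :=
  (step2 A)^[s] (Submodule.span ℂ {u})

lemma step_eq_step2 (N : LieSubalgebra ℂ L) (W : Submodule ℂ V) :
    step N W = step2 N.toSubmodule W := rfl

lemma le_step2 (A : Submodule ℂ L) (W : Submodule ℂ V) : W ≤ step2 A W := le_sup_left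

lemma lie_mem_step2 {A : Submodule ℂ L} {W : Submodule ℂ V} {x : L} (hx : x ∈ A)
    {w : V} (hw : w ∈ W) : ⁅x, w⁆ ∈ step2 A W :=
  Submodule.mem_sup_right (Submodule.subset_span ⟨x, hx, w, hw, rfl⟩)

lemma step2_le {A : Submodule ℂ L} {W Z : Submodule ℂ V}
    (hW : W ≤ Z) (hgen : ∀ x ∈ A, ∀ w ∈ W, ⁅x, w⁆ ∈ Z) : step2 A W ≤ Z := by
  refine sup_le hW ?_
  rw [Submodule.span_le]
  rintro z ⟨x, hx, w, hw, rfl⟩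
  exact hgen x hx w hw

lemma filt2_succ (A : Submodule ℂ L) (u : V) (s : ℕ) :
    filt2 A u (s + 1) = step2 A (filt2 A u s) :=
  Function.iterate_succ_apply' _ _ _

lemma filt2_zero (A : Submodule ℂ L) (u : V) : filt2 A u 0 = Submodule.span ℂ {u} := rfl

lemma filt2_mono (A : Submodule ℂ L) (u : V) : Monotone (filt2 A u) :=
  monotone_nat_of_le_succ fun s => by rw [filt2_succ]; exact le_step2 _ _

lemma filt_eq_filt2 (N : LieSubalgebra ℂ L) (v : V) (s : ℕ) :
    filt N v s = filt2 N.toSubmodule v s := rfl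

lemma filt_succ (N : LieSubalgebra ℂ L) (v : V) (s : ℕ) :
    filt N v (s + 1) = step2 N.toSubmodule (filt N v s) :=
  Function.iterate_succ_apply' _ _ _

lemma filt_zero (N : LieSubalgebra ℂ L) (v : V) : filt N v 0 = Submodule.span ℂ {v} := rfl

lemma filt_mono (N : LieSubalgebra ℂ L) (v : V) : Monotone (filt N v) :=
  monotone_nat_of_le_succ fun s => by rw [filt_succ]; exact le_step2 _ _

/-- Establish `⁅x, ·⁆`-stability through one `step2`, via `comap` along `toEnd`. -/
lemma lie_mem_step2_of {A : Submodule ℂ L} {W Z : Submodule ℂ V} (x : L)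
    (hW : ∀ w ∈ W, ⁅x, w⁆ ∈ Z)
    (hgen : ∀ y ∈ A, ∀ w ∈ W, ⁅x, ⁅y, w⁆⁆ ∈ Z) :
    ∀ w ∈ step2 A W, ⁅x, w⁆ ∈ Z := by
  intro w hw
  have h : step2 A W ≤ Z.comap (LieModule.toEnd ℂ L V x) := by
    refine step2_le ?_ ?_
    · intro u hu
      simpa only [Submodule.mem_comap, LieModule.toEnd_apply_apply] using hW u hu
    · intro y hy u hu
      simpa only [Submodule.mem_comap, LieModule.toEnd_apply_apply] using hgen y hy u hu
  simpa only [Submodule.mem_comap, LieModule.toEnd_apply_apply] using h hw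

lemma IsTriangularDecomp.exists_decomp {H npos nneg : LieSubalgebra ℂ L}
    (htri : IsTriangularDecomp H npos nneg) (z : L) :
    ∃ a ∈ npos, ∃ b ∈ H, ∃ c ∈ nneg, z = a + b + c := by
  have h1 : (⨆ i : Fin 3, ![npos.toSubmodule, H.toSubmodule, nneg.toSubmodule] i) = ⊤ :=
    htri.directSum.submodule_iSup_eq_top
  have h2 : z ∈ npos.toSubmodule ⊔ H.toSubmodule ⊔ nneg.toSubmodule := by
    have hz : z ∈ (⨆ i : Fin 3, ![npos.toSubmodule, H.toSubmodule, nneg.toSubmodule] i) := by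
      rw [h1]; trivial
    have hle : (⨆ i : Fin 3, ![npos.toSubmodule, H.toSubmodule, nneg.toSubmodule] i) ≤
        npos.toSubmodule ⊔ H.toSubmodule ⊔ nneg.toSubmodule := by
      refine iSup_le fun i => ?_
      fin_cases i
      · exact le_sup_of_le_left le_sup_left
      · exact le_sup_of_le_left le_sup_right
      · exact le_sup_right
    exact hle hz
  rcases Submodule.mem_sup.mp h2 with ⟨y, hy, c, hc, rfl⟩
  rcases Submodule.mem_sup.mp hy with ⟨a, ha, b, hb, rfl⟩
  exact ⟨a, ha, b, hb, c, hc, rfl⟩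

section Stability

variable {H npos nneg : LieSubalgebra ℂ L} {lam : Module.Dual ℂ H} {v : V}

lemma lie_mem_filt_H
    (hstab : ∀ x ∈ H, ∀ y ∈ nneg, ⁅x, y⁆ ∈ nneg)
    (hv_wt : ∀ x : H, ⁅(x : L), v⁆ = lam x • v) (x : H) :
    ∀ s, ∀ w ∈ filt nneg v s, ⁅(x : L), w⁆ ∈ filt nneg v s := by
  intro s
  induction s with
  | zero =>
    intro w hw
    rcases Submodule.mem_span_singleton.mp hw with ⟨c, rfl⟩
    rw [lie_smul, hv_wt x]
    exact Submodule.smul_mem _ _ (Submodule.smul_mem _ _ (Submodule.mem_span_singleton_self v))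
  | succ s ih =>
    rw [filt_succ]
    refine lie_mem_step2_of (x : L) ?_ ?_
    · intro w hw
      exact le_step2 _ _ (ih w hw)
    · intro y hy w hw
      rw [leibniz_lie]
      exact add_mem (lie_mem_step2 (hstab (x : L) x.2 y hy) hw) (lie_mem_step2 hy (ih w hw))

lemma lie_mem_filt_pos (htri : IsTriangularDecomp H npos nneg)
    (hv_npos : ∀ x ∈ npos, ⁅x, v⁆ = 0)
    (hv_wt : ∀ x : H, ⁅(x : L), v⁆ = lam x • v) :
    ∀ s, ∀ x ∈ npos, ∀ w ∈ filt nneg v s, ⁅x, w⁆ ∈ filt nneg v s := by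
  intro s
  induction s with
  | zero =>
    intro x hx w hw
    rcases Submodule.mem_span_singleton.mp hw with ⟨c, rfl⟩
    rw [lie_smul, hv_npos x hx, smul_zero]
    exact zero_mem _
  | succ s ih =>
    intro x hx
    rw [filt_succ]
    refine lie_mem_step2_of x ?_ ?_
    · intro w hw
      exact le_step2 _ _ (ih x hx w hw)
    · intro y hy w hw
      rw [leibniz_lie]
      refine add_mem ?_ (lie_mem_step2 hy (ih x hx w hw))
      obtain ⟨a, ha, b, hb, c, hc, hz⟩ := htri.exists_decomp ⁅x, y⁆
      rw [hz, add_lie, add_lie]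
      refine add_mem (add_mem ?_ ?_) ?_
      · exact le_step2 _ _ (ih a ha w hw)
      · exact le_step2 _ _ (lie_mem_filt_H htri.neg_stable hv_wt ⟨b, hb⟩ s w hw)
      · exact lie_mem_step2 hc hw

lemma mem_filt_self (N : LieSubalgebra ℂ L) (v : V) (s : ℕ) : v ∈ filt N v s :=
  filt_mono N v (Nat.zero_le s) (Submodule.mem_span_singleton_self v)

lemma filt_eq_top_of_fixed [LieModule.IsIrreducible ℂ L V]
    (htri : IsTriangularDecomp H npos nneg) (hv : v ≠ 0)
    (hv_npos : ∀ x ∈ npos, ⁅x, v⁆ = 0)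
    (hv_wt : ∀ x : H, ⁅(x : L), v⁆ = lam x • v)
    {s : ℕ} (hfix : step2 nneg.toSubmodule (filt nneg v s) = filt nneg v s) :
    filt nneg v s = ⊤ := by
  have hL : ∀ (x : L), ∀ w ∈ filt nneg v s, ⁅x, w⁆ ∈ filt nneg v s := by
    intro x w hw
    obtain ⟨a, ha, b, hb, c, hc, rfl⟩ := htri.exists_decomp x
    rw [add_lie, add_lie]
    refine add_mem (add_mem ?_ ?_) ?_
    · exact lie_mem_filt_pos htri hv_npos hv_wt s a ha w hw
    · exact lie_mem_filt_H htri.neg_stable hv_wt ⟨b, hb⟩ s w hw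
    · rw [← hfix]
      exact lie_mem_step2 hc hw
  let W' : LieSubmodule ℂ L V :=
    { toSubmodule := filt nneg v s, lie_mem := fun {x m} hm => hL x m hm }
  rcases eq_bot_or_eq_top W' with hb | ht
  · exfalso
    have hvW : v ∈ W' := mem_filt_self nneg v s
    rw [hb] at hvW
    exact hv (by simpa using hvW)
  · have := congrArg LieSubmodule.toSubmodule ht
    exact this.trans (by simp)

lemma exists_fixed_filt [FiniteDimensional ℂ V] (N : LieSubalgebra ℂ L) (v : V) :
    ∃ s, step2 N.toSubmodule (filt N v s) = filt N v s := by
  by_contra h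
  push_neg at h
  have hlt : ∀ s, filt N v s < filt N v (s + 1) := fun s =>
    lt_of_le_of_ne (filt_mono N v (Nat.le_succ s))
      (by rw [filt_succ]; exact fun he => h s he.symm)
  have hr : ∀ s, s ≤ finrank ℂ (filt N v s) := by
    intro s
    induction s with
    | zero => exact Nat.zero_le _
    | succ s ih => exact lt_of_le_of_lt ih (Submodule.finrank_lt_finrank_of_lt (hlt s))
  have h1 := hr (finrank ℂ V + 1)
  have h2 := Submodule.finrank_le (filt N v (finrank ℂ V + 1))
  omega

lemma filt_eq_top_of_lowest_mem [LieModule.IsIrreducible ℂ L V]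
    (htri : IsTriangularDecomp H npos nneg)
    (hv_npos : ∀ x ∈ npos, ⁅x, v⁆ = 0)
    (hv_wt : ∀ x : H, ⁅(x : L), v⁆ = lam x • v)
    {v' : V} (hv' : v' ≠ 0) (hv'_lowest : ∀ x ∈ nneg, ⁅x, v'⁆ = 0)
    {s : ℕ} (hmem : v' ∈ filt nneg v s) : filt nneg v s = ⊤ := by
  set A : Submodule ℂ L := npos.toSubmodule ⊔ H.toSubmodule with hA
  have hMle : ∀ k, filt2 A v' k ≤ filt nneg v s := by
    intro k
    induction k with
    | zero =>
      rw [filt2_zero]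
      exact Submodule.span_le.mpr (by simpa using hmem)
    | succ k ih =>
      rw [filt2_succ]
      refine step2_le ih ?_
      intro x hx w hw
      rcases Submodule.mem_sup.mp hx with ⟨a, ha, b, hb, rfl⟩
      rw [add_lie]
      exact add_mem (lie_mem_filt_pos htri hv_npos hv_wt s a ha w (ih hw))
        (lie_mem_filt_H htri.neg_stable hv_wt ⟨b, hb⟩ s w (ih hw))
  have hneg : ∀ k, ∀ c ∈ nneg, ∀ w ∈ filt2 A v' k, ⁅c, w⁆ ∈ filt2 A v' k := by
    intro k
    induction k with
    | zero =>
      intro c hc w hw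
      rcases Submodule.mem_span_singleton.mp hw with ⟨r, rfl⟩
      rw [lie_smul, hv'_lowest c hc, smul_zero]
      exact zero_mem _
    | succ k ih =>
      intro c hc
      rw [filt2_succ]
      refine lie_mem_step2_of c ?_ ?_
      · intro w hw
        exact le_step2 _ _ (ih c hc w hw)
      · intro y hy w hw
        rw [leibniz_lie]
        refine add_mem ?_ (lie_mem_step2 hy (ih c hc w hw))
        obtain ⟨a, ha, b, hb, c2, hc2, hz⟩ := htri.exists_decomp ⁅c, y⁆
        rw [hz, add_lie, add_lie]
        refine add_mem (add_mem ?_ ?_) ?_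
        · exact lie_mem_step2 (Submodule.mem_sup_left ha) hw
        · exact lie_mem_step2 (Submodule.mem_sup_right hb) hw
        · exact le_step2 _ _ (ih c2 hc2 w hw)
  have hmem_iff : ∀ w : V, w ∈ (⨆ k, filt2 A v' k) ↔ ∃ k, w ∈ filt2 A v' k := fun w =>
    Submodule.mem_iSup_of_chain ⟨filt2 A v', filt2_mono A v'⟩ w
  have hdir : ∀ x : L, ∀ w ∈ (⨆ k, filt2 A v' k), ⁅x, w⁆ ∈ (⨆ k, filt2 A v' k) := by
    intro x w hw
    rw [hmem_iff] at hw ⊢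
    obtain ⟨k, hk⟩ := hw
    obtain ⟨a, ha, b, hb, c, hc, rfl⟩ := htri.exists_decomp x
    refine ⟨k + 1, ?_⟩
    rw [add_lie, add_lie, filt2_succ]
    refine add_mem (add_mem ?_ ?_) ?_
    · exact lie_mem_step2 (Submodule.mem_sup_left ha) hk
    · exact lie_mem_step2 (Submodule.mem_sup_right hb) hk
    · exact le_step2 _ _ (hneg k c hc _ hk)
  have hT : (⨆ k, filt2 A v' k) = ⊤ := by
    let W' : LieSubmodule ℂ L V :=
      { toSubmodule := ⨆ k, filt2 A v' k, lie_mem := fun {x m} hm => hdir x m hm }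
    rcases eq_bot_or_eq_top W' with hb | ht
    · exfalso
      have hv'W : v' ∈ W' :=
        le_iSup (filt2 A v') 0 (Submodule.mem_span_singleton_self v')
      rw [hb] at hv'W
      exact hv' (by simpa using hv'W)
    · have := congrArg LieSubmodule.toSubmodule ht
      exact this.trans (by simp)
  exact le_antisymm le_top (hT ▸ iSup_le hMle)

end Stability

/-- The minimal `s` such that the lowest weight vector `v'` of `V(λ)` lies in
`V(λ)_s` equals `deg p_λ(q)`, and the PBW filtration stabilizes exactly at that
step: `V(λ) = V(λ)_{s_λ}`. -/
theorem sInf_lowest_eq_degree_and_filtration_stabilizes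
    {L : Type*} [LieRing L] [LieAlgebra ℂ L] [FiniteDimensional ℂ L]
    [LieAlgebra.IsSimple ℂ L]
    (H npos nneg : LieSubalgebra ℂ L) (htri : IsTriangularDecomp H npos nneg)
    {V : Type*} [AddCommGroup V] [Module ℂ V] [LieRingModule L V] [LieModule ℂ L V]
    [FiniteDimensional ℂ V] [LieModule.IsIrreducible ℂ L V]
    (lam : Module.Dual ℂ H) (v : V) (hv : v ≠ 0)
    (hv_npos : ∀ x ∈ npos, ⁅x, v⁆ = 0)
    (hv_wt : ∀ x : H, ⁅(x : L), v⁆ = lam x • v)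
    (v' : V) (hv' : v' ≠ 0)
    (hv'_lowest : ∀ x ∈ nneg, ⁅x, v'⁆ = 0) :
    sInf {s : ℕ | v' ∈ filt nneg v s} = (hp nneg v).natDegree ∧
      filt nneg v (sInf {s : ℕ | v' ∈ filt nneg v s}) = ⊤ := by
  classical
  obtain ⟨s₀, hs₀⟩ := exists_fixed_filt nneg v
  have hs₀top : filt nneg v s₀ = ⊤ := filt_eq_top_of_fixed htri hv hv_npos hv_wt hs₀
  set S := sInf {s | filt nneg v s = ⊤} with hSdef
  have hne : {s | filt nneg v s = ⊤}.Nonempty := ⟨s₀, hs₀top⟩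
  have hS : filt nneg v S = ⊤ := Nat.sInf_mem hne
  have hSmin : ∀ t, filt nneg v t = ⊤ → S ≤ t := fun t ht => Nat.sInf_le ht
  have htop_ge : ∀ t, S ≤ t → filt nneg v t = ⊤ := fun t ht =>
    le_antisymm le_top (hS ▸ filt_mono nneg v ht)
  have hstrict : ∀ t, t < S → filt nneg v t < filt nneg v (t + 1) := by
    intro t ht
    refine lt_of_le_of_ne (filt_mono nneg v (Nat.le_succ t)) fun he => ?_
    have hfix : step2 nneg.toSubmodule (filt nneg v t) = filt nneg v t := by
      rw [← filt_succ, ← he]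
    have htop := filt_eq_top_of_fixed htri hv hv_npos hv_wt hfix
    exact absurd (hSmin t htop) (Nat.not_le.mpr ht)
  have hset : {s : ℕ | v' ∈ filt nneg v s} = {s | filt nneg v s = ⊤} := by
    ext s
    constructor
    · intro h
      exact filt_eq_top_of_lowest_mem htri hv_npos hv_wt hv' hv'_lowest h
    · intro h
      show v' ∈ filt nneg v s
      rw [Set.mem_setOf_eq] at h
      rw [h]
      trivial
  have hsInf : sInf {s : ℕ | v' ∈ filt nneg v s} = S := by rw [hset]
  have hrank : ∀ t, t ≤ S → t < finrank ℂ (filt nneg v t) := by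
    intro t
    induction t with
    | zero =>
      intro _
      rw [filt_zero]
      simp [finrank_span_singleton hv]
    | succ t ih =>
      intro h
      have h1 := ih (le_of_lt (Nat.lt_of_succ_le h))
      have h2 := Submodule.finrank_lt_finrank_of_lt (hstrict t (Nat.lt_of_succ_le h))
      omega
  have hSlt : S < finrank ℂ V := lt_of_lt_of_le (hrank S le_rfl) (Submodule.finrank_le _)
  have hpos : ∀ t, t ≤ S → hpCoeff nneg v t ≠ 0 := by
    intro t ht
    cases t with
    | zero =>
      show finrank ℂ (filt nneg v 0) ≠ 0
      rw [filt_zero, finrank_span_singleton hv]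
      exact one_ne_zero
    | succ t =>
      show finrank ℂ (filt nneg v (t + 1)) - finrank ℂ (filt nneg v t) ≠ 0
      have := Submodule.finrank_lt_finrank_of_lt (hstrict t (Nat.lt_of_succ_le ht))
      omega
  have hczero : ∀ t, S < t → hpCoeff nneg v t = 0 := by
    intro t ht
    cases t with
    | zero => omega
    | succ t =>
      show finrank ℂ (filt nneg v (t + 1)) - finrank ℂ (filt nneg v t) = 0
      rw [htop_ge (t + 1) (by omega), htop_ge t (by omega)]
      omega
  have hcoeff : ∀ k, (hp nneg v).coeff k =
      if k < finrank ℂ V + 1 then hpCoeff nneg v k else 0 := by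
    intro k
    rw [hp, finset_sum_coeff]
    simp only [coeff_C_mul, coeff_X_pow, mul_ite, mul_one, mul_zero]
    rw [Finset.sum_ite_eq (Finset.range (finrank ℂ V + 1)) k (fun s => hpCoeff nneg v s)]
    simp [Finset.mem_range]
  have hdeg : (hp nneg v).natDegree = S := by
    apply le_antisymm
    · rw [natDegree_le_iff_coeff_eq_zero]
      intro m hm
      rw [hcoeff m]
      split
      · exact hczero m hm
      · rfl
    · apply le_natDegree_of_ne_zero
      rw [hcoeff S, if_pos (by omega)]
      exact hpos S le_rfl
  exact ⟨by rw [hsInf, hdeg], by rw [hsInf]; exact hS⟩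

end PBW
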